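/- Let V ∈ C²([-1,1]) satisfy 1 ≤ V''(y) ≤ 3 for all y. Let ψ ∈ H³(T × [-1,1]) with ψ = 0 on the boundary y = ±1, and set ω = Δψ. Then ‖∂_{xx}ψ‖²_{L²} ≤ 4‖∂_{xy}ψ‖²_{L²} + ‖V'·∂_x ω‖²_{L²}. -/

import Mathlib

open Real

/-- Partial derivative in `x`. -/
noncomputable def pdx (f : ℝ × ℝ → ℝ) (p : ℝ × ℝ) : ℝ := deriv (fun t => f (t, p.2)) p.1

/-- Partial derivative in `y`. -/
noncomputable def pdy (f : ℝ × ℝ → ℝ) (p : ℝ × ℝ) : ℝ := deriv (fun t => f (p.1, t)) p.2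

/-- Iterated partial derivative `∂_x^i ∂_y^j`. -/
noncomputable def pd (i j : ℕ) (f : ℝ × ℝ → ℝ) : ℝ × ℝ → ℝ := pdx^[i] (pdy^[j] f)

/-- The Laplacian `Δ = ∂_x² + ∂_y²`. -/
noncomputable def lap (f : ℝ × ℝ → ℝ) : ℝ × ℝ → ℝ := fun p => pdx (pdx f) p + pdy (pdy f) p
/-- Integral over the channel `T × [-1,1]` (periodic in `x` with period `2π`). -/
noncomputable def cint (f : ℝ × ℝ → ℝ) : ℝ :=
  ∫ x in (0:ℝ)..(2 * π), ∫ y in (-1:ℝ)..1, f (x, y)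

/-- Squared `L²` norm on the channel. -/
noncomputable def cL2sq (f : ℝ × ℝ → ℝ) : ℝ := cint (fun p => (f p) ^ 2)

section Toolbox
open MeasureTheory intervalIntegral

variable {F : Type*} [NormedAddCommGroup F] [NormedSpace ℝ F]

lemma hasDerivAt_slice_x (f : ℝ × ℝ → F) (p : ℝ × ℝ) (hf : DifferentiableAt ℝ f p) :
    HasDerivAt (fun t => f (t, p.2)) (fderiv ℝ f p (1, 0)) p.1 := by
  have h1 : HasDerivAt (fun t : ℝ => (t, p.2)) ((1 : ℝ), (0 : ℝ)) p.1 :=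
    HasDerivAt.prodMk (hasDerivAt_id p.1) (hasDerivAt_const p.1 p.2)
  have := hf.hasFDerivAt.comp_hasDerivAt p.1 (by simpa using h1)
  exact this

lemma hasDerivAt_slice_y (f : ℝ × ℝ → F) (p : ℝ × ℝ) (hf : DifferentiableAt ℝ f p) :
    HasDerivAt (fun t => f (p.1, t)) (fderiv ℝ f p (0, 1)) p.2 := by
  have h1 : HasDerivAt (fun t : ℝ => (p.1, t)) ((0 : ℝ), (1 : ℝ)) p.2 :=
    HasDerivAt.prodMk (hasDerivAt_const p.2 p.1) (hasDerivAt_id p.2)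
  have := hf.hasFDerivAt.comp_hasDerivAt p.2 (by simpa using h1)
  exact this

lemma pdx_eq (f : ℝ × ℝ → ℝ) (p : ℝ × ℝ) (hf : DifferentiableAt ℝ f p) :
    pdx f p = fderiv ℝ f p (1, 0) := (hasDerivAt_slice_x f p hf).deriv

lemma pdy_eq (f : ℝ × ℝ → ℝ) (p : ℝ × ℝ) (hf : DifferentiableAt ℝ f p) :
    pdy f p = fderiv ℝ f p (0, 1) := (hasDerivAt_slice_y f p hf).deriv

lemma hasDerivAt_pdx (f : ℝ × ℝ → ℝ) (p : ℝ × ℝ) (hf : DifferentiableAt ℝ f p) :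
    HasDerivAt (fun t => f (t, p.2)) (pdx f p) p.1 := by
  rw [pdx_eq f p hf]; exact hasDerivAt_slice_x f p hf

lemma hasDerivAt_pdy (f : ℝ × ℝ → ℝ) (p : ℝ × ℝ) (hf : DifferentiableAt ℝ f p) :
    HasDerivAt (fun t => f (p.1, t)) (pdy f p) p.2 := by
  rw [pdy_eq f p hf]; exact hasDerivAt_slice_y f p hf

lemma contDiff_pdx {n : ℕ∞} {f : ℝ × ℝ → ℝ} (hf : ContDiff ℝ (n + 1) f) :
    ContDiff ℝ n (pdx f) := by
  have h : pdx f = fun p => fderiv ℝ f p (1, 0) := by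
    funext p
    exact pdx_eq f p ((hf.differentiable (by simp)).differentiableAt)
  rw [h]
  exact (hf.fderiv_right le_rfl).clm_apply contDiff_const

lemma contDiff_pdy {n : ℕ∞} {f : ℝ × ℝ → ℝ} (hf : ContDiff ℝ (n + 1) f) :
    ContDiff ℝ n (pdy f) := by
  have h : pdy f = fun p => fderiv ℝ f p (0, 1) := by
    funext p
    exact pdy_eq f p ((hf.differentiable (by simp)).differentiableAt)
  rw [h]
  exact (hf.fderiv_right le_rfl).clm_apply contDiff_const

/-- Clairaut's theorem. -/
lemma pdx_pdy_comm (f : ℝ × ℝ → ℝ) (hf : ContDiff ℝ 2 f) (p : ℝ × ℝ) :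
    pdx (pdy f) p = pdy (pdx f) p := by
  have hd : Differentiable ℝ f := hf.differentiable (by norm_num)
  have hf' : ContDiff ℝ 1 (fderiv ℝ f) := hf.fderiv_right (by norm_num)
  have hd' : Differentiable ℝ (fderiv ℝ f) := hf'.differentiable (by norm_num)
  have hpdy : pdy f = fun q => fderiv ℝ f q (0, 1) := funext fun q => pdy_eq f q (hd q)
  have hpdx : pdx f = fun q => fderiv ℝ f q (1, 0) := funext fun q => pdx_eq f q (hd q)
  have hsymm : fderiv ℝ (fderiv ℝ f) p (1, 0) (0, 1) = fderiv ℝ (fderiv ℝ f) p (0, 1) (1, 0) :=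
    (hf.contDiffAt.isSymmSndFDerivAt (by norm_num)).eq (1, 0) (0, 1)
  have h1 : pdx (pdy f) p = fderiv ℝ (fderiv ℝ f) p (1, 0) (0, 1) := by
    rw [hpdy]
    have hA : HasDerivAt (fun t => fderiv ℝ f (t, p.2)) (fderiv ℝ (fderiv ℝ f) p (1, 0)) p.1 :=
      hasDerivAt_slice_x (fderiv ℝ f) p (hd' p)
    exact (hA.clm_apply (hasDerivAt_const _ _)).deriv.trans (by simp)
  have h2 : pdy (pdx f) p = fderiv ℝ (fderiv ℝ f) p (0, 1) (1, 0) := by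
    rw [hpdx]
    have hA : HasDerivAt (fun t => fderiv ℝ f (p.1, t)) (fderiv ℝ (fderiv ℝ f) p (0, 1)) p.2 :=
      hasDerivAt_slice_y (fderiv ℝ f) p (hd' p)
    exact (hA.clm_apply (hasDerivAt_const _ _)).deriv.trans (by simp)
  rw [h1, h2, hsymm]

lemma pdx_periodic {f : ℝ × ℝ → ℝ} (h : ∀ x y, f (x + 2 * π, y) = f (x, y)) :
    ∀ x y, pdx f (x + 2 * π, y) = pdx f (x, y) := by
  intro x y
  show deriv (fun t => f (t, y)) (x + 2 * π) = deriv (fun t => f (t, y)) x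
  rw [← deriv_comp_add_const (fun t => f (t, y)) (2 * π) x]
  congr 1
  funext t
  exact h t y

lemma pdy_periodic {f : ℝ × ℝ → ℝ} (h : ∀ x y, f (x + 2 * π, y) = f (x, y)) :
    ∀ x y, pdy f (x + 2 * π, y) = pdy f (x, y) := by
  intro x y
  show deriv (fun t => f (x + 2 * π, t)) y = deriv (fun t => f (x, t)) y
  congr 1
  funext t
  exact h x t

lemma pdx_bc {f : ℝ × ℝ → ℝ} {b : ℝ} (h : ∀ x, f (x, b) = 0) : ∀ x, pdx f (x, b) = 0 := by
  intro x
  show deriv (fun t => f (t, b)) x = 0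
  have : (fun t => f (t, b)) = fun _ => (0:ℝ) := funext h
  rw [this, deriv_const]

lemma cont_inner {f : ℝ × ℝ → ℝ} (hf : Continuous f) :
    Continuous fun x => ∫ y in (-1:ℝ)..1, f (x, y) :=
  continuous_parametric_intervalIntegral_of_continuous' (f := fun x y => f (x, y))
    (by exact hf.comp (continuous_fst.prodMk continuous_snd)) _ _

lemma cint_add {f g : ℝ × ℝ → ℝ} (hf : Continuous f) (hg : Continuous g) :
    cint (fun p => f p + g p) = cint f + cint g := by
  unfold cint
  have h1 : ∀ x : ℝ, (∫ y in (-1:ℝ)..1, (f (x, y) + g (x, y)))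
      = (∫ y in (-1:ℝ)..1, f (x, y)) + ∫ y in (-1:ℝ)..1, g (x, y) := fun x =>
    integral_add ((hf.comp (by continuity)).intervalIntegrable _ _)
      ((hg.comp (by continuity)).intervalIntegrable _ _)
  rw [show (fun x : ℝ => ∫ y in (-1:ℝ)..1, (fun p => f p + g p) (x, y))
      = fun x => (∫ y in (-1:ℝ)..1, f (x, y)) + ∫ y in (-1:ℝ)..1, g (x, y) from funext h1]
  exact integral_add ((cont_inner hf).intervalIntegrable _ _)
    ((cont_inner hg).intervalIntegrable _ _)

lemma cint_const_mul (c : ℝ) (f : ℝ × ℝ → ℝ) :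
    cint (fun p => c * f p) = c * cint f := by
  unfold cint
  simp_rw [intervalIntegral.integral_const_mul]

lemma cint_mono {f g : ℝ × ℝ → ℝ} (hf : Continuous f) (hg : Continuous g)
    (h : ∀ p : ℝ × ℝ, p.2 ∈ Set.Icc (-1:ℝ) 1 → f p ≤ g p) : cint f ≤ cint g := by
  unfold cint
  have h1 : ∀ x : ℝ, (∫ y in (-1:ℝ)..1, f (x, y)) ≤ ∫ y in (-1:ℝ)..1, g (x, y) := fun x =>
    integral_mono_on (by norm_num) ((hf.comp (by continuity)).intervalIntegrable _ _)
      ((hg.comp (by continuity)).intervalIntegrable _ _) (fun y hy => h (x, y) hy)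
  exact integral_mono_on (by positivity) ((cont_inner hf).intervalIntegrable _ _)
    ((cont_inner hg).intervalIntegrable _ _) (fun x _ => h1 x)

lemma cint_swap {f : ℝ × ℝ → ℝ} (hf : Continuous f) :
    cint f = ∫ y in (-1:ℝ)..1, ∫ x in (0:ℝ)..(2 * π), f (x, y) := by
  unfold cint
  have h2π : (0:ℝ) ≤ 2 * π := by positivity
  simp_rw [integral_of_le h2π, integral_of_le (by norm_num : (-1:ℝ) ≤ 1)]
  have hint : Integrable (Function.uncurry fun x y => f (x, y))
      ((volume.restrict (Set.Ioc (0:ℝ) (2*π))).prod (volume.restrict (Set.Ioc (-1:ℝ) 1))) := by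
    rw [Measure.prod_restrict]
    have h0 : IntegrableOn f (Set.Icc (0:ℝ) (2*π) ×ˢ Set.Icc (-1:ℝ) 1) volume :=
      hf.continuousOn.integrableOn_compact (isCompact_Icc.prod isCompact_Icc)
    have h := h0.mono_set (Set.prod_mono Set.Ioc_subset_Icc_self Set.Ioc_subset_Icc_self)
    rw [IntegrableOn, Measure.volume_eq_prod] at h
    exact h
  exact integral_integral_swap hint

lemma integral_x_loop {F F' : ℝ → ℝ} (hd : ∀ x, HasDerivAt F (F' x) x) (hc : Continuous F')
    (hper : F (2 * π) = F 0) : ∫ x in (0:ℝ)..(2 * π), F' x = 0 := by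
  rw [integral_eq_sub_of_hasDerivAt (fun x _ => hd x) (hc.intervalIntegrable _ _), hper, sub_self]

lemma integral_ftc_y {F F' : ℝ → ℝ} (hd : ∀ y, HasDerivAt F (F' y) y) (hc : Continuous F') :
    ∫ y in (-1:ℝ)..1, F' y = F 1 - F (-1) :=
  integral_eq_sub_of_hasDerivAt (fun y _ => hd y) (hc.intervalIntegrable _ _)

end Toolbox

set_option maxHeartbeats 2000000 in
/-- Let `V ∈ C²([-1,1])` with `1 ≤ V'' ≤ 3`, and let `ψ ∈ H³` of the channel
`T × [-1,1]` vanishing on the boundary `y = ±1`; set `ω = Δψ`.  Then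
`‖∂_xx ψ‖²_{L²} ≤ 4‖∂_xy ψ‖²_{L²} + ‖V' ∂_x ω‖²_{L²}`. -/
theorem channel_xx_estimate (V : ℝ → ℝ) (hV : ContDiff ℝ 2 V)
    (hV'' : ∀ y ∈ Set.Icc (-1:ℝ) 1, 1 ≤ deriv (deriv V) y ∧ deriv (deriv V) y ≤ 3)
    (ψ : ℝ × ℝ → ℝ) (hψ : ContDiff ℝ 3 ψ)
    (hper : ∀ x y : ℝ, ψ (x + 2 * π, y) = ψ (x, y))
    (hbc : ∀ x : ℝ, ψ (x, 1) = 0 ∧ ψ (x, -1) = 0) :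
    cL2sq (pdx (pdx ψ))
      ≤ 4 * cL2sq (pdy (pdx ψ))
        + cL2sq (fun p => deriv V p.2 * pdx (lap ψ) p) := by
  -- abbreviations
  set A := pdx (pdx ψ) with hA_def
  set Q := pdy (pdx ψ) with hQ_def
  set ω := pdx (lap ψ) with hω_def
  -- smoothness
  have hψ2 : ContDiff ℝ 2 (pdx ψ) := contDiff_pdx (n := 2) (by exact_mod_cast hψ)
  have hψy2 : ContDiff ℝ 2 (pdy ψ) := contDiff_pdy (n := 2) (by exact_mod_cast hψ)
  have hA1 : ContDiff ℝ 1 A := contDiff_pdx (n := 1) (by exact_mod_cast hψ2)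
  have hQ1 : ContDiff ℝ 1 Q := contDiff_pdy (n := 1) (by exact_mod_cast hψ2)
  have hψyy1 : ContDiff ℝ 1 (pdy (pdy ψ)) := contDiff_pdy (n := 1) (by exact_mod_cast hψy2)
  have hAc : Continuous A := hA1.continuous
  have hQc : Continuous Q := hQ1.continuous
  have hAxc : Continuous (pdx A) := (contDiff_pdx (n := 0) (by exact_mod_cast hA1)).continuous
  have hAyc : Continuous (pdy A) := (contDiff_pdy (n := 0) (by exact_mod_cast hA1)).continuous
  have hQxc : Continuous (pdx Q) := (contDiff_pdx (n := 0) (by exact_mod_cast hQ1)).continuous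
  have hQyc : Continuous (pdy Q) := (contDiff_pdy (n := 0) (by exact_mod_cast hQ1)).continuous
  have hAd : Differentiable ℝ A := hA1.differentiable one_ne_zero
  have hQd : Differentiable ℝ Q := hQ1.differentiable one_ne_zero
  have hlap1 : ContDiff ℝ 1 (lap ψ) := hA1.add hψyy1
  have hωc : Continuous ω := (contDiff_pdx (n := 0) (by exact_mod_cast hlap1)).continuous
  -- the weight W
  set a0 := deriv V (-1) with ha0
  set b0 := deriv V 1 with hb0
  set c := max a0 (min b0 0) with hc
  set W : ℝ → ℝ := fun y => deriv V y - c with hW_def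
  have hdV1 : ContDiff ℝ 1 (deriv V) :=
    (contDiff_succ_iff_deriv.mp (by exact_mod_cast hV : ContDiff ℝ (1 + 1) V)).2.2
  have hdVc : Continuous (deriv V) := hdV1.continuous
  have hV''c : Continuous (deriv (deriv V)) := hdV1.continuous_deriv le_rfl
  have hWc : Continuous W := hdVc.sub continuous_const
  have hWd : ∀ y, HasDerivAt W (deriv (deriv V) y) y := fun y =>
    ((hdV1.differentiable one_ne_zero y).hasDerivAt).sub_const c
  have hmono : MonotoneOn (deriv V) (Set.Icc (-1:ℝ) 1) :=
    (strictMonoOn_of_deriv_pos (convex_Icc _ _) hdVc.continuousOn (fun x hx => by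
      rw [interior_Icc] at hx
      linarith [(hV'' x ⟨le_of_lt hx.1, le_of_lt hx.2⟩).1])).monotoneOn
  have hab : a0 ≤ b0 := hmono (by norm_num) (by norm_num) (by norm_num)
  have hca : a0 ≤ c := le_max_left _ _
  have hcb : c ≤ b0 := max_le hab (min_le_left _ _)
  have hW1 : 0 ≤ W 1 := by
    show (0:ℝ) ≤ deriv V 1 - c
    rw [← hb0]; linarith
  have hWm1 : W (-1) ≤ 0 := by
    show deriv V (-1) - c ≤ 0
    rw [← ha0]; linarith
  have hWsq : ∀ y ∈ Set.Icc (-1:ℝ) 1, W y ^ 2 ≤ deriv V y ^ 2 := by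
    intro y hy
    have h1 : a0 ≤ deriv V y := hmono (by norm_num) hy hy.1
    have h2 : deriv V y ≤ b0 := hmono hy (by norm_num) hy.2
    have key : c * (c - 2 * deriv V y) ≤ 0 := by
      rcases le_total b0 0 with hb | hb
      · have hcb0 : c = b0 := by rw [hc, min_eq_left hb, max_eq_right hab]
        rw [hcb0]
        nlinarith [mul_nonneg (neg_nonneg.mpr hb) (by linarith : (0:ℝ) ≤ b0 - 2 * deriv V y)]
      · rcases le_total a0 0 with ha | ha
        · have hc0 : c = 0 := by rw [hc, min_eq_right hb, max_eq_right ha]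
          rw [hc0]; ring_nf; exact le_rfl
        · have hc0 : c = a0 := by rw [hc, min_eq_right hb, max_eq_left ha]
          rw [hc0]
          nlinarith [mul_nonneg ha (by linarith : (0:ℝ) ≤ 2 * deriv V y - a0)]
    show (deriv V y - c) ^ 2 ≤ deriv V y ^ 2
    nlinarith [key]
  -- periodicity and boundary facts
  have hQper : ∀ x y, Q (x + 2 * π, y) = Q (x, y) := pdy_periodic (pdx_periodic hper)
  have hAper : ∀ x y, A (x + 2 * π, y) = A (x, y) := pdx_periodic (pdx_periodic hper)
  have hAbc1 : ∀ x, A (x, 1) = 0 := pdx_bc (pdx_bc (fun x => (hbc x).1))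
  have hAbcm1 : ∀ x, A (x, -1) = 0 := pdx_bc (pdx_bc (fun x => (hbc x).2))
  -- Clairaut facts
  have hClQ : pdx Q = pdy A := by
    funext p
    exact pdx_pdy_comm (pdx ψ) hψ2 p
  have hω_split : ω = fun p => pdx A p + pdy Q p := by
    have h1 : pdx (pdy ψ) = Q := by
      funext p
      exact pdx_pdy_comm ψ (hψ.of_le (by norm_num)) p
    funext p
    have h2 : pdx (lap ψ) p = pdx A p + pdx (pdy (pdy ψ)) p := by
      have hA' : HasDerivAt (fun t => A (t, p.2)) (pdx A p) p.1 :=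
        hasDerivAt_pdx A p (hAd p)
      have hB' : HasDerivAt (fun t => pdy (pdy ψ) (t, p.2)) (pdx (pdy (pdy ψ)) p) p.1 :=
        hasDerivAt_pdx (pdy (pdy ψ)) p ((hψyy1.differentiable one_ne_zero) p)
      exact (hA'.add hB').deriv
    have h3 : pdx (pdy (pdy ψ)) p = pdy Q p := by
      have := pdx_pdy_comm (pdy ψ) hψy2 p
      rw [this, h1]
    rw [hω_def, h2, h3]
  -- helper continuity
  have hxy : ∀ y : ℝ, Continuous fun x : ℝ => ((x, y) : ℝ × ℝ) :=
    fun y => continuous_id.prodMk continuous_const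
  have hyx : ∀ x : ℝ, Continuous fun y : ℝ => ((x, y) : ℝ × ℝ) :=
    fun x => continuous_const.prodMk continuous_id
  have hcT1a : Continuous fun p : ℝ × ℝ => W p.2 * (pdx Q p * A p + Q p * pdx A p) :=
    (hWc.comp continuous_snd).mul ((hQxc.mul hAc).add (hQc.mul hAxc))
  -- Step T1a : x-integration by parts, using periodicity
  have hT1a : cint (fun p => W p.2 * (pdx Q p * A p + Q p * pdx A p)) = 0 := by
    rw [cint_swap hcT1a]
    have inner0 : ∀ y : ℝ,
        (∫ x in (0:ℝ)..(2 * π),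
          W y * (pdx Q (x, y) * A (x, y) + Q (x, y) * pdx A (x, y))) = 0 := by
      intro y
      have hd : ∀ x : ℝ, HasDerivAt (fun x => W y * (Q (x, y) * A (x, y)))
          (W y * (pdx Q (x, y) * A (x, y) + Q (x, y) * pdx A (x, y))) x := fun x =>
        ((hasDerivAt_pdx Q (x, y) (hQd _)).mul (hasDerivAt_pdx A (x, y) (hAd _))).const_mul (W y)
      have hcc : Continuous fun x : ℝ =>
          W y * (pdx Q (x, y) * A (x, y) + Q (x, y) * pdx A (x, y)) :=
        continuous_const.mul (((hQxc.comp (hxy y)).mul (hAc.comp (hxy y))).add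
          ((hQc.comp (hxy y)).mul (hAxc.comp (hxy y))))
      refine integral_x_loop hd hcc ?_
      show W y * (Q (2 * π, y) * A (2 * π, y)) = W y * (Q (0, y) * A (0, y))
      rw [show (2 * π : ℝ) = 0 + 2 * π from (zero_add _).symm, hQper, hAper]
    exact (intervalIntegral.integral_congr (fun y _ => inner0 y)).trans (by simp)
  -- Step T1b : y-integration by parts for the A-term (boundary vanishes)
  have hT1b : cint (fun p => deriv (deriv V) p.2 * A p ^ 2 + W p.2 * (2 * A p * pdy A p)) = 0 := by
    have inner0 : ∀ x : ℝ,
        (∫ y in (-1:ℝ)..1,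
          (deriv (deriv V) y * A (x, y) ^ 2 + W y * (2 * A (x, y) * pdy A (x, y)))) = 0 := by
      intro x
      have hd : ∀ y : ℝ, HasDerivAt (fun y => W y * A (x, y) ^ 2)
          (deriv (deriv V) y * A (x, y) ^ 2 + W y * (2 * A (x, y) * pdy A (x, y))) y := by
        intro y
        have hA' : HasDerivAt (fun t => A (x, t)) (pdy A (x, y)) y :=
          hasDerivAt_pdy A (x, y) (hAd _)
        have := (hWd y).mul (hA'.pow 2)
        rw [show (fun y => W y * A (x, y) ^ 2) = W * (fun t => A (x, t)) ^ 2 from rfl]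
        simpa [pow_one, mul_comm, mul_assoc, mul_left_comm] using this
      have hcc : Continuous fun y : ℝ =>
          deriv (deriv V) y * A (x, y) ^ 2 + W y * (2 * A (x, y) * pdy A (x, y)) :=
        (hV''c.mul ((hAc.comp (hyx x)).pow 2)).add
          (hWc.mul ((continuous_const.mul (hAc.comp (hyx x))).mul (hAyc.comp (hyx x))))
      rw [integral_ftc_y hd hcc]
      show W 1 * A (x, 1) ^ 2 - W (-1) * A (x, -1) ^ 2 = 0
      rw [hAbc1 x, hAbcm1 x]
      ring
    have h0 : cint (fun p => deriv (deriv V) p.2 * A p ^ 2 + W p.2 * (2 * A p * pdy A p))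
        = ∫ x in (0:ℝ)..(2 * π), (0:ℝ) :=
      intervalIntegral.integral_congr (fun x _ => inner0 x)
    rw [h0]; simp
  -- Step T2 : y-integration by parts for the Q-term (boundary has a sign)
  have hT2 : 0 ≤ cint (fun p => deriv (deriv V) p.2 * Q p ^ 2 + W p.2 * (2 * Q p * pdy Q p)) := by
    have inner_eq : ∀ x : ℝ,
        (∫ y in (-1:ℝ)..1,
          (deriv (deriv V) y * Q (x, y) ^ 2 + W y * (2 * Q (x, y) * pdy Q (x, y))))
          = W 1 * Q (x, 1) ^ 2 - W (-1) * Q (x, -1) ^ 2 := by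
      intro x
      have hd : ∀ y : ℝ, HasDerivAt (fun y => W y * Q (x, y) ^ 2)
          (deriv (deriv V) y * Q (x, y) ^ 2 + W y * (2 * Q (x, y) * pdy Q (x, y))) y := by
        intro y
        have hQ' : HasDerivAt (fun t => Q (x, t)) (pdy Q (x, y)) y :=
          hasDerivAt_pdy Q (x, y) (hQd _)
        have := (hWd y).mul (hQ'.pow 2)
        rw [show (fun y => W y * Q (x, y) ^ 2) = W * (fun t => Q (x, t)) ^ 2 from rfl]
        simpa [pow_one, mul_comm, mul_assoc, mul_left_comm] using this
      have hcc : Continuous fun y : ℝ =>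
          deriv (deriv V) y * Q (x, y) ^ 2 + W y * (2 * Q (x, y) * pdy Q (x, y)) :=
        (hV''c.mul ((hQc.comp (hyx x)).pow 2)).add
          (hWc.mul ((continuous_const.mul (hQc.comp (hyx x))).mul (hQyc.comp (hyx x))))
      exact integral_ftc_y hd hcc
    have hpt : ∀ x : ℝ, (0:ℝ) ≤ ∫ y in (-1:ℝ)..1,
        (deriv (deriv V) y * Q (x, y) ^ 2 + W y * (2 * Q (x, y) * pdy Q (x, y))) := by
      intro x
      rw [inner_eq x]
      nlinarith [sq_nonneg (Q (x, 1)), sq_nonneg (Q (x, -1))]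
    unfold cint
    exact intervalIntegral.integral_nonneg (by positivity) (fun x _ => hpt x)
  -- continuity of various integrands
  have cWs : Continuous fun p : ℝ × ℝ => W p.2 := hWc.comp continuous_snd
  have cV''s : Continuous fun p : ℝ × ℝ => deriv (deriv V) p.2 := hV''c.comp continuous_snd
  have cVs : Continuous fun p : ℝ × ℝ => deriv V p.2 := hdVc.comp continuous_snd
  have c1 : Continuous fun p : ℝ × ℝ => W p.2 * (pdx Q p * A p) := cWs.mul (hQxc.mul hAc)
  have c2 : Continuous fun p : ℝ × ℝ => W p.2 * (Q p * pdx A p) := cWs.mul (hQc.mul hAxc)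
  have c3 : Continuous fun p : ℝ × ℝ => deriv (deriv V) p.2 * A p ^ 2 := cV''s.mul (hAc.pow 2)
  have c4 : Continuous fun p : ℝ × ℝ => W p.2 * (2 * A p * pdy A p) :=
    cWs.mul ((continuous_const.mul hAc).mul hAyc)
  have c5 : Continuous fun p : ℝ × ℝ => deriv (deriv V) p.2 * Q p ^ 2 := cV''s.mul (hQc.pow 2)
  have c6 : Continuous fun p : ℝ × ℝ => W p.2 * (Q p * pdy Q p) := cWs.mul (hQc.mul hQyc)
  have c7 : Continuous fun p : ℝ × ℝ => W p.2 * Q p * ω p := (cWs.mul hQc).mul hωc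
  have cA2 : Continuous fun p : ℝ × ℝ => A p ^ 2 := hAc.pow 2
  have cQ2 : Continuous fun p : ℝ × ℝ => Q p ^ 2 := hQc.pow 2
  have cZ2 : Continuous fun p : ℝ × ℝ => (deriv V p.2 * ω p) ^ 2 := (cVs.mul hωc).pow 2
  -- assemble the identity pieces
  have e1 : cint (fun p => W p.2 * (pdy A p * A p)) + cint (fun p => W p.2 * (Q p * pdx A p)) = 0 := by
    rw [← cint_add (by simpa [← hClQ] using c1) c2]
    rw [show (fun p : ℝ × ℝ => W p.2 * (pdy A p * A p) + W p.2 * (Q p * pdx A p))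
        = fun p => W p.2 * (pdx Q p * A p + Q p * pdx A p) by
      funext p; rw [hClQ]; ring]
    exact hT1a
  have e2 : cint (fun p => deriv (deriv V) p.2 * A p ^ 2)
      + 2 * cint (fun p => W p.2 * (pdy A p * A p)) = 0 := by
    rw [← cint_const_mul 2 _, ← cint_add c3 (by
      exact (continuous_const.mul ((cWs.mul (hAyc.mul hAc)))))]
    rw [show (fun p : ℝ × ℝ => deriv (deriv V) p.2 * A p ^ 2 + 2 * (W p.2 * (pdy A p * A p)))
        = fun p => deriv (deriv V) p.2 * A p ^ 2 + W p.2 * (2 * A p * pdy A p) by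
      funext p; ring]
    exact hT1b
  have e3 : cint (fun p => deriv (deriv V) p.2 * Q p ^ 2)
      + 2 * cint (fun p => W p.2 * (Q p * pdy Q p)) ≥ 0 := by
    rw [← cint_const_mul 2 _, ← cint_add c5 (by
      exact (continuous_const.mul (cWs.mul (hQc.mul hQyc))))]
    rw [show (fun p : ℝ × ℝ => deriv (deriv V) p.2 * Q p ^ 2 + 2 * (W p.2 * (Q p * pdy Q p)))
        = fun p => deriv (deriv V) p.2 * Q p ^ 2 + W p.2 * (2 * Q p * pdy Q p) by
      funext p; ring]
    exact hT2
  have e4 : cint (fun p => W p.2 * Q p * ω p)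
      = cint (fun p => W p.2 * (Q p * pdx A p)) + cint (fun p => W p.2 * (Q p * pdy Q p)) := by
    rw [← cint_add c2 c6]
    congr 1
    funext p
    rw [hω_split]
    ring
  -- pointwise estimates
  have m1 : cint (fun p => A p ^ 2) ≤ cint (fun p => deriv (deriv V) p.2 * A p ^ 2) :=
    cint_mono cA2 c3 (fun p hp => by nlinarith [(hV'' p.2 hp).1, sq_nonneg (A p)])
  have m2 : cint (fun p => deriv (deriv V) p.2 * Q p ^ 2) ≤ 3 * cint (fun p => Q p ^ 2) := by
    rw [← cint_const_mul 3 _]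
    exact cint_mono c5 (by exact (continuous_const.mul cQ2))
      (fun p hp => by nlinarith [(hV'' p.2 hp).2, sq_nonneg (Q p)])
  have m3 : 2 * cint (fun p => W p.2 * Q p * ω p)
      ≤ cint (fun p => Q p ^ 2) + cint (fun p => (deriv V p.2 * ω p) ^ 2) := by
    rw [← cint_const_mul 2 _, ← cint_add cQ2 cZ2]
    refine cint_mono (by exact (continuous_const.mul c7)) (cQ2.add cZ2) ?_
    intro p hp
    have h1 := hWsq p.2 hp
    nlinarith [sq_nonneg (Q p - W p.2 * ω p), sq_nonneg (ω p)]
  -- final chain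
  show cint (fun p => A p ^ 2) ≤ 4 * cint (fun p => Q p ^ 2)
      + cint (fun p => (deriv V p.2 * ω p) ^ 2)
  linarith [m1, m2, m3, e1, e2, e3, e4]
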